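/- Fix c > 0 and λ ∈ ℝ with |λ| < c. For n : ℕ define D_n := (n·(n−2)/4)·kl((c+λ)/n, c/n) + (n²/4)·kl((c−λ)/n, c/n) (real-valued, with n cast to ℝ). Then D_n/n converges, as n → ∞ (Filter.atTop), to I(λ) := (1/4)·[(c+λ)·log((c+λ)/c) + (c−λ)·log((c−λ)/c)]. Equivalently, the Kullback–Leibler divergence between the sparse two-block SBM with within/between edge probabilities (c±λ)/n and the sparse Erdős–Rényi model with edge probability c/n satisfies D_n = I(λ)·n + o(n). -/

import Mathlib

open Filter Real

/-- Bernoulli Kullback--Leibler divergence `kl(p,q) = p log(p/q) + (1−p) log((1−p)/(1−q))`. -/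
noncomputable def bernKL (p q : ℝ) : ℝ :=
  p * Real.log (p / q) + (1 - p) * Real.log ((1 - p) / (1 - q))

lemma nlog_aux (a : ℝ) : Tendsto (fun n : ℕ => (n:ℝ) * Real.log (1 - a / n)) atTop (nhds (-a)) := by
  have hd : HasDerivAt (fun t : ℝ => Real.log (1 - a * t)) (-a) 0 := by
    have h1 : HasDerivAt (fun t : ℝ => 1 - a * t) (-a) 0 := by
      simpa using ((hasDerivAt_id 0).const_mul a).const_sub 1
    have h2 := (Real.hasDerivAt_log (by norm_num : (1:ℝ) - a * 0 ≠ 0)).comp 0 h1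
    rw [show (1 - a * 0)⁻¹ * -a = -a by simp] at h2; exact h2
  have hs := hasDerivAt_iff_tendsto_slope.mp hd
  have hu : Tendsto (fun n : ℕ => (1:ℝ)/n) atTop (nhdsWithin 0 {(0:ℝ)}ᶜ) := by
    apply tendsto_nhdsWithin_of_tendsto_nhds_of_eventually_within
    · exact tendsto_one_div_atTop_nhds_zero_nat
    · filter_upwards [eventually_ge_atTop 1] with n hn
      simp [Nat.one_le_iff_ne_zero.mp hn]
  apply (hs.comp hu).congr'
  filter_upwards [eventually_ge_atTop 1] with n hn
  have hn' : (n:ℝ) ≠ 0 := Nat.cast_ne_zero.mpr (Nat.one_le_iff_ne_zero.mp hn)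
  simp [slope, Function.comp, div_eq_mul_inv, mul_comm, hn']

lemma nkl_aux (a c : ℝ) (ha : 0 < a) (hc : 0 < c) :
    Tendsto (fun n : ℕ => (n:ℝ) * bernKL (a / n) (c / n)) atTop
      (nhds (a * Real.log (a / c) + (c - a))) := by
  have h1 : Tendsto (fun n : ℕ => (1 - a / (n:ℝ)) *
      ((n:ℝ) * Real.log (1 - a / n) - (n:ℝ) * Real.log (1 - c / n))) atTop
      (nhds ((1 - 0) * (-a - -c))) := by
    refine Tendsto.mul ?_ ((nlog_aux a).sub (nlog_aux c))
    exact (tendsto_const_nhds.sub (tendsto_const_nhds.div_atTop tendsto_natCast_atTop_atTop))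
  have h2 : Tendsto (fun n : ℕ => a * Real.log (a / c) + (1 - a / (n:ℝ)) *
      ((n:ℝ) * Real.log (1 - a / n) - (n:ℝ) * Real.log (1 - c / n))) atTop
      (nhds (a * Real.log (a / c) + (1 - 0) * (-a - -c))) := tendsto_const_nhds.add h1
  have heq : (a * Real.log (a / c) + (1 - 0) * (-a - -c)) = a * Real.log (a / c) + (c - a) := by ring
  rw [heq] at h2
  apply h2.congr'
  filter_upwards [eventually_gt_atTop (max 1 (Nat.ceil (max a c)))] with n hn
  have hn' : (0:ℝ) < (n:ℝ) := by
    have : 0 < n := lt_of_le_of_lt (Nat.zero_le _) hn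
    exact_mod_cast this
  have han : a < (n:ℝ) := by
    calc a ≤ max a c := le_max_left _ _
    _ ≤ (Nat.ceil (max a c) : ℝ) := Nat.le_ceil _
    _ < n := by exact_mod_cast lt_of_le_of_lt (le_max_right 1 _) hn
  have hcn : c < (n:ℝ) := by
    calc c ≤ max a c := le_max_right _ _
    _ ≤ (Nat.ceil (max a c) : ℝ) := Nat.le_ceil _
    _ < n := by exact_mod_cast lt_of_le_of_lt (le_max_right 1 _) hn
  have ha1 : 0 < 1 - a / (n:ℝ) := by rw [sub_pos]; exact (div_lt_one hn').mpr han
  have hc1 : 0 < 1 - c / (n:ℝ) := by rw [sub_pos]; exact (div_lt_one hn').mpr hcn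
  have e1 : (a/(n:ℝ))/(c/(n:ℝ)) = a/c := by
    field_simp
  rw [bernKL, e1, Real.log_div ha1.ne' hc1.ne']
  field_simp

/-- Per-vertex KL information between the sparse two-block SBM and sparse Erdős–Rényi:
`D_n / n → I(λ)`. -/
theorem sbm_er_kl_per_vertex (c lam : ℝ) (hc : 0 < c) (hlam : |lam| < c) :
    Tendsto
      (fun n : ℕ =>
        (((n : ℝ) * ((n : ℝ) - 2) / 4) * bernKL ((c + lam) / n) (c / n) +
          ((n : ℝ) ^ 2 / 4) * bernKL ((c - lam) / n) (c / n)) / (n : ℝ))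
      atTop
      (nhds ((1 / 4) * ((c + lam) * Real.log ((c + lam) / c) +
        (c - lam) * Real.log ((c - lam) / c)))) := by
  obtain ⟨hl1, hl2⟩ := abs_lt.mp hlam
  have hp := nkl_aux (c + lam) c (by linarith) hc
  have hm := nkl_aux (c - lam) c (by linarith) hc
  have hq : Tendsto (fun n : ℕ => 1 - 2 / (n:ℝ)) atTop (nhds (1 - 0)) :=
    tendsto_const_nhds.sub (tendsto_const_nhds.div_atTop tendsto_natCast_atTop_atTop)
  have h := (hq.mul (hp.const_mul (1/4))).add (hm.const_mul (1/4))
  have heq : ((1:ℝ) - 0) * (1/4 * ((c + lam) * Real.log ((c + lam) / c) + (c - (c + lam)))) +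
      1/4 * ((c - lam) * Real.log ((c - lam) / c) + (c - (c - lam))) =
      (1 / 4) * ((c + lam) * Real.log ((c + lam) / c) +
        (c - lam) * Real.log ((c - lam) / c)) := by ring
  rw [heq] at h
  apply h.congr'
  filter_upwards [eventually_ge_atTop 1] with n hn
  have hn' : (n:ℝ) ≠ 0 := Nat.cast_ne_zero.mpr (Nat.one_le_iff_ne_zero.mp hn)
  set k1 := bernKL ((c + lam) / n) (c / n)
  set k2 := bernKL ((c - lam) / n) (c / n)
  field_simp
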